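/- Let H be a real Hilbert space, T > 0, ρ ∈ (0,∞], and let C : [0,T] ⇉ H satisfy (H₁), (H₂), and (H₃). Let x : [0,T] → H be an admissible trajectory for C, and assume its differential measure dx is absolutely continuous with respect to a complete positive Radon measure ν on [0,T], with density v ∈ L¹_ν([0,T];H). Then the following are equivalent: (i) for every continuous y : [0,T] → H with y(t) ∈ C(t) for ν-a.e. t, ∫₀ᵀ [⟨v(t), y(t) − x(t)⟩ + (‖v(t)‖/(2ρ))‖y(t) − x(t)‖²] dν(t) ≥ 0 (x is an integral solution with respect to ν); (ii) −v(t) ∈ N^P(C(t); x(t)) for ν-a.e. t ∈ [0,T] (x is a solution in the sense of differential measures with respect to ν); (iii) E_ν(x) = 0, where E_ν(x) := inf_{y∈A_ν} ∫₀ᵀ [⟨v(t), y(t) − x(t)⟩ + (‖v(t)‖/(2ρ))‖y(t) − x(t)‖²] dν(t) and A_ν is the set of continuous y : [0,T] → H with y(t) ∈ C(t) for ν-a.e. t. -/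

import Mathlib

open MeasureTheory Set Metric Filter Topology
open scoped RealInnerProductSpace ENNReal

/-- The proximal normal cone of `S` at `x`: `ζ ∈ N^P(S;x)` iff there are `σ ≥ 0`, `η > 0`
with `⟪ζ, y - x⟫ ≤ σ‖y - x‖²` for all `y ∈ S` with `‖y - x‖ < η`. -/
def ProxNormalCone {H : Type*} [NormedAddCommGroup H] [InnerProductSpace ℝ H]
    (S : Set H) (x : H) : Set H :=
  {ζ : H | ∃ σ : ℝ, 0 ≤ σ ∧ ∃ η : ℝ, 0 < η ∧
    ∀ y ∈ S, ‖y - x‖ < η → ⟪ζ, y - x⟫ ≤ σ * ‖y - x‖ ^ 2}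

/-- `ρ`-uniform prox-regularity, with `ρ ∈ (0,∞]` encoded in `ℝ≥0∞`.
For `ρ = ∞` one has `‖ζ‖ / (2 * ρ.toReal) = ‖ζ‖ / 0 = 0`, recovering the convex inequality. -/
def UniformlyProxRegular {H : Type*} [NormedAddCommGroup H] [InnerProductSpace ℝ H]
    (ρ : ℝ≥0∞) (S : Set H) : Prop :=
  ∀ x ∈ S, ∀ ζ ∈ ProxNormalCone S x, ∀ x' ∈ S,
    ⟪ζ, x' - x⟫ ≤ ‖ζ‖ / (2 * ρ.toReal) * ‖x' - x‖ ^ 2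

/-- Lower semicontinuity of a set-valued map on a set `A`: for every `a ∈ A` and open `U`
meeting `C a`, the set of points of `A` where `C` meets `U` is a neighborhood of `a` in `A`. -/
def LscOn {α β : Type*} [TopologicalSpace α] [TopologicalSpace β]
    (C : α → Set β) (A : Set α) : Prop :=
  ∀ a ∈ A, ∀ U : Set β, IsOpen U → (C a ∩ U).Nonempty →
    {a' | a' ∈ A ∧ (C a' ∩ U).Nonempty} ∈ nhdsWithin a A

/-- Admissible trajectory for a moving set `C` on `[0,T]`: right-continuous, of bounded
variation, with `x 0 ∈ C 0` and `x t ∈ C t` for all `t ∈ [0,T]`. -/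
def AdmissibleTrajectory {E : Type*} [NormedAddCommGroup E]
    (C : ℝ → Set E) (T : ℝ) (x : ℝ → E) : Prop :=
  (∀ t ∈ Icc (0:ℝ) T, ContinuousWithinAt x (Ici t) t) ∧
    BoundedVariationOn x (Icc (0:ℝ) T) ∧ x 0 ∈ C 0 ∧ ∀ t ∈ Icc (0:ℝ) T, x t ∈ C t

/-- The differential measure `dx` is absolutely continuous w.r.t. `ν` with density
`v ∈ L¹_ν`: `x t = x 0 + ∫_{(0,t]} v dν` for all `t ∈ [0,T]`. -/
def HasDensity {E : Type*} [NormedAddCommGroup E] [NormedSpace ℝ E]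
    (T : ℝ) (ν : Measure ℝ) (x v : ℝ → E) : Prop :=
  Integrable v ν ∧ ∀ t ∈ Icc (0:ℝ) T, x t = x 0 + ∫ s in Ioc (0:ℝ) t, v s ∂ν

/-- A (complete) positive Radon measure on `[0,T]`: a finite inner regular Borel measure
carried by `[0,T]`. -/
def IsRadonOn (ν : Measure ℝ) (T : ℝ) : Prop :=
  IsFiniteMeasure ν ∧ ν.InnerRegular ∧ ν ((Icc (0:ℝ) T)ᶜ) = 0

/-- The bounded selection-extension property (H₃). -/
def SelectionExtension {E : Type*} [NormedAddCommGroup E] (C : ℝ → Set E) (T : ℝ) : Prop :=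
  ∀ x : ℝ → E, (∃ M : ℝ, ∀ t ∈ Icc (0:ℝ) T, ‖x t‖ ≤ M) →
    (∀ t ∈ Icc (0:ℝ) T, x t ∈ C t) → ∀ η : ℝ, 0 < η →
    ∃ R : ℝ, 0 < R ∧
      ∀ K : Set ℝ, IsCompact K → K ⊆ Icc (0:ℝ) T →
        ∀ y : ℝ → E, ContinuousOn y K → (∀ t ∈ K, y t ∈ C t) →
          (∀ t ∈ K, ‖y t - x t‖ ≤ η) →
          ∃ ybar : ℝ → E, ContinuousOn ybar (Icc (0:ℝ) T) ∧
            (∀ t ∈ Icc (0:ℝ) T, ybar t ∈ C t) ∧ (∀ t ∈ K, ybar t = y t) ∧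
            ∀ t ∈ Icc (0:ℝ) T, ‖ybar t‖ ≤ R

/-- Hypothesis (H₁): each `C t` is nonempty, closed, connected and `ρ`-uniformly prox-regular. -/
def HypH1 {H : Type*} [NormedAddCommGroup H] [InnerProductSpace ℝ H]
    (ρ : ℝ≥0∞) (C : ℝ → Set H) (T : ℝ) : Prop :=
  ∀ t ∈ Icc (0:ℝ) T, (C t).Nonempty ∧ IsClosed (C t) ∧ IsConnected (C t) ∧
    UniformlyProxRegular ρ (C t)


section LusinSec
variable {E : Type*} [NormedAddCommGroup E] {ν : Measure ℝ}

lemma lusin_simpleFunc [IsFiniteMeasure ν] [ν.InnerRegular]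
    (g : SimpleFunc ℝ E) {A : Set ℝ} (hA : MeasurableSet A) {ε : ℝ≥0∞} (hε : ε ≠ 0) :
    ∃ K, K ⊆ A ∧ IsCompact K ∧ ν (A \ K) ≤ ε ∧ ContinuousOn g K := by
  classical
  set R := g.range with hR
  set δ : ℝ≥0∞ := ε / R.card with hδ
  have hδ0 : δ ≠ 0 := by
    simp only [hδ]
    exact ENNReal.div_ne_zero.2 ⟨hε, by simp⟩
  -- for each value c, a compact inside the fiber
  have hfib : ∀ c : E, ∃ K, K ⊆ A ∩ g ⁻¹' {c} ∧ IsCompact K ∧ ν ((A ∩ g ⁻¹' {c}) \ K) < δ := by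
    intro c
    have hms : MeasurableSet (A ∩ g ⁻¹' {c}) := hA.inter (g.measurableSet_fiber c)
    exact hms.exists_isCompact_diff_lt (measure_ne_top ν _) hδ0
  choose Kc hKc_sub hKc_cpt hKc_meas using hfib
  refine ⟨⋃ c ∈ R, Kc c, ?_, ?_, ?_, ?_⟩
  · exact iUnion₂_subset fun c _ => (hKc_sub c).trans inter_subset_left
  · exact R.isCompact_biUnion fun c _ => hKc_cpt c
  · have hsub : A \ (⋃ c ∈ R, Kc c) ⊆ ⋃ c ∈ R, ((A ∩ g ⁻¹' {c}) \ Kc c) := by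
      intro t ht
      refine mem_iUnion₂.2 ⟨g t, g.mem_range_self t, ⟨ht.1, rfl⟩, fun hmem => ht.2 ?_⟩
      exact mem_iUnion₂.2 ⟨g t, g.mem_range_self t, hmem⟩
    calc ν (A \ ⋃ c ∈ R, Kc c) ≤ ∑ c ∈ R, ν ((A ∩ g ⁻¹' {c}) \ Kc c) :=
          (measure_mono hsub).trans (measure_biUnion_finset_le R _)
      _ ≤ ∑ _c ∈ R, δ := Finset.sum_le_sum fun c _ => (hKc_meas c).le
      _ = R.card * δ := by rw [Finset.sum_const, nsmul_eq_mul]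
      _ ≤ ε := by
          rw [hδ]
          exact ENNReal.mul_div_le
  · -- continuity
    intro t ht
    obtain ⟨c, hcR, htc⟩ := mem_iUnion₂.1 ht
    have hgt : g t = c := ((hKc_sub c htc).2 : g t ∈ ({c} : Set E))
    have hclosed : IsClosed (⋃ c' ∈ R.erase c, Kc c') :=
      (R.erase c).isCompact_biUnion (fun c' _ => hKc_cpt c') |>.isClosed
    have htV : t ∈ (⋃ c' ∈ R.erase c, Kc c')ᶜ := by
      intro hmem
      obtain ⟨c', hc'R, htc'⟩ := mem_iUnion₂.1 hmem
      have : g t = c' := ((hKc_sub c' htc').2 : g t ∈ ({c'} : Set E))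
      exact (Finset.ne_of_mem_erase hc'R) (by rw [← this, hgt])
    have hV : (⋃ c' ∈ R.erase c, Kc c')ᶜ ∈ 𝓝 t := hclosed.isOpen_compl.mem_nhds htV
    have hev : (fun s => g s) =ᶠ[𝓝[⋃ c ∈ R, Kc c] t] fun _ => c := by
      filter_upwards [nhdsWithin_le_nhds hV, self_mem_nhdsWithin] with s hsV hsK
      obtain ⟨c', hc'R, hsc'⟩ := mem_iUnion₂.1 hsK
      have hgs : g s = c' := ((hKc_sub c' hsc').2 : g s ∈ ({c'} : Set E))
      by_cases h : c' = c
      · rw [hgs, h]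
      · exact absurd (mem_iUnion₂.2 ⟨c', Finset.mem_erase.2 ⟨h, hc'R⟩, hsc'⟩) hsV
    exact (continuousWithinAt_const (b := c)).congr_of_eventuallyEq hev hgt


lemma lusin_stronglyMeasurable [IsFiniteMeasure ν] [ν.InnerRegular]
    {f : ℝ → E} (hf : StronglyMeasurable f) {A : Set ℝ} (hA : MeasurableSet A)
    {ε : ℝ≥0∞} (hε : ε ≠ 0) :
    ∃ K, K ⊆ A ∧ IsCompact K ∧ ν (A \ K) ≤ ε ∧ ContinuousOn f K := by
  classical
  obtain ⟨δ0, hδpos0, hδsum0⟩ := ENNReal.exists_pos_sum_of_countable' hε ℕ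
  set δ : ℕ → ℝ≥0∞ := fun n => min (δ0 n) 1 with hδdef
  have hδpos : ∀ n, 0 < δ n := fun n => lt_min (hδpos0 n) one_pos
  have hδfin : ∀ n, δ n ≠ ∞ := fun n => (min_le_right _ _).trans_lt ENNReal.one_lt_top |>.ne
  have hδsum : ∑' n, δ n ≤ ε := le_trans (ENNReal.tsum_le_tsum fun n => min_le_left _ _) hδsum0.le
  have hδ0R : (0:ℝ) < (δ 0).toReal := ENNReal.toReal_pos (hδpos 0).ne' (hδfin 0)
  obtain ⟨t, htA, htm, htle, hunif⟩ := tendstoUniformlyOn_of_ae_tendsto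
    (f := fun n => hf.approx n) (g := f) (μ := ν) (s := A)
    (fun n => (hf.approx n).stronglyMeasurable) hf hA (measure_ne_top ν A)
    (ae_of_all _ fun x _ => hf.tendsto_approx x) hδ0R
  have htle' : ν t ≤ δ 0 := by rwa [ENNReal.ofReal_toReal (hδfin 0)] at htle
  set A₁ : Set ℝ := A \ t with hA₁def
  have hA₁m : MeasurableSet A₁ := hA.diff htm
  have hK : ∀ n : ℕ, ∃ K, K ⊆ A₁ ∧ IsCompact K ∧ ν (A₁ \ K) ≤ δ (n+1) ∧
      ContinuousOn (hf.approx n) K :=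
    fun n => lusin_simpleFunc (hf.approx n) hA₁m (hδpos (n+1)).ne'
  choose K hKsub hKcpt hKmeas hKcont using hK
  refine ⟨⋂ n, K n, (iInter_subset K 0).trans ((hKsub 0).trans diff_subset), ?_, ?_, ?_⟩
  · exact (hKcpt 0).of_isClosed_subset (isClosed_iInter fun n => (hKcpt n).isClosed)
      (iInter_subset K 0)
  · have hsub : A \ ⋂ n, K n ⊆ t ∪ ⋃ n, (A₁ \ K n) := by
      intro s hs
      by_cases hst : s ∈ t
      · exact Or.inl hst
      · have h2 : ¬ ∀ n, s ∈ K n := fun h => hs.2 (mem_iInter.2 h)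
        obtain ⟨n, hn⟩ := not_forall.1 h2
        exact Or.inr (mem_iUnion.2 ⟨n, ⟨hs.1, hst⟩, hn⟩)
    calc ν (A \ ⋂ n, K n) ≤ ν t + ∑' n, ν (A₁ \ K n) :=
          (measure_mono hsub).trans ((measure_union_le _ _).trans
            (by gcongr; exact measure_iUnion_le _))
      _ ≤ δ 0 + ∑' n, δ (n+1) :=
          add_le_add htle' (ENNReal.tsum_le_tsum fun n => hKmeas n)
      _ = ∑' n, δ n := (tsum_eq_zero_add' ENNReal.summable).symm
      _ ≤ ε := hδsum
  · have hmono : TendstoUniformlyOn (fun n => hf.approx n) f atTop (⋂ n, K n) :=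
      hunif.mono ((iInter_subset K 0).trans (by
        intro s hs; exact ⟨(hKsub 0 hs).1, (hKsub 0 hs).2⟩))
    exact hmono.continuousOn (Eventually.of_forall fun n =>
      (hKcont n).mono (iInter_subset K n)).frequently

lemma lusin_aestronglyMeasurable [IsFiniteMeasure ν] [ν.InnerRegular]
    {f : ℝ → E} {A : Set ℝ} (hA : MeasurableSet A)
    (hf : AEStronglyMeasurable f (ν.restrict A))
    {ε : ℝ≥0∞} (hε : ε ≠ 0) :
    ∃ K, K ⊆ A ∧ IsCompact K ∧ ν (A \ K) ≤ ε ∧ ContinuousOn f K := by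
  set f' := hf.mk f with hf'def
  have hZ : ν ({a | f a ≠ f' a} ∩ A) = 0 := by
    have h1 := hf.ae_eq_mk
    rw [Filter.EventuallyEq, ae_iff] at h1
    rw [← Measure.restrict_apply' hA]
    exact h1
  set Z' := toMeasurable ν ({a | f a ≠ f' a} ∩ A) with hZ'def
  have hZ'm : MeasurableSet Z' := measurableSet_toMeasurable _ _
  have hZ'0 : ν Z' = 0 := by rw [hZ'def, measure_toMeasurable]; exact hZ
  obtain ⟨K, hKsub, hKcpt, hKmeas, hKcont⟩ :=
    lusin_stronglyMeasurable (ν := ν) hf.stronglyMeasurable_mk (hA.diff hZ'm) hε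
  refine ⟨K, hKsub.trans diff_subset, hKcpt, ?_, ?_⟩
  · have : A \ K ⊆ ((A \ Z') \ K) ∪ Z' := by
      intro s hs
      by_cases hsz : s ∈ Z'
      · exact Or.inr hsz
      · exact Or.inl ⟨⟨hs.1, hsz⟩, hs.2⟩
    calc ν (A \ K) ≤ ν ((A \ Z') \ K) + ν Z' := (measure_mono this).trans (measure_union_le _ _)
      _ ≤ ε + ν Z' := by gcongr
      _ = ε := by rw [hZ'0, add_zero]
  · refine hKcont.congr fun s hs => ?_
    have hsA := hKsub hs
    by_contra hne
    exact hsA.2 (subset_toMeasurable _ _ ⟨hne, hsA.1⟩)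


end LusinSec

section Aux
variable {E : Type*} [NormedAddCommGroup E] {ν : Measure ℝ}

/-- absolute continuity of the integral -/
lemma exists_small_setIntegral (g : ℝ → ℝ) (hg : Integrable g ν) {ε : ℝ} (hε : 0 < ε) :
    ∃ δ : ℝ≥0∞, 0 < δ ∧ ∀ s : Set ℝ, ν s < δ → |∫ t in s, g t ∂ν| ≤ ε := by
  have hfin : ∫⁻ t, ENNReal.ofReal ‖g t‖ ∂ν ≠ ∞ := by
    have := hg.hasFiniteIntegral
    rw [hasFiniteIntegral_iff_norm] at this
    exact this.ne
  obtain ⟨δ, hδpos, hδ⟩ := exists_pos_setLIntegral_lt_of_measure_lt hfin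
    (ε := ENNReal.ofReal ε) (by simp [hε])
  refine ⟨δ, hδpos, fun s hs => ?_⟩
  have h1 : ‖∫ t in s, g t ∂ν‖ ≤ (∫⁻ t in s, ENNReal.ofReal ‖g t‖ ∂ν).toReal :=
    norm_integral_le_lintegral_norm g
  have h2 := hδ s hs
  calc |∫ t in s, g t ∂ν| ≤ (∫⁻ t in s, ENNReal.ofReal ‖g t‖ ∂ν).toReal := h1
    _ ≤ ε := by
        calc (∫⁻ t in s, ENNReal.ofReal ‖g t‖ ∂ν).toReal
            ≤ (ENNReal.ofReal ε).toReal := ENNReal.toReal_mono (by simp) h2.le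
          _ = ε := ENNReal.toReal_ofReal hε.le

/-- every non-null set has a point all whose neighborhoods meet it in non-null measure -/
lemma exists_density_point {S : Set ℝ} (hS : ν S ≠ 0) :
    ∃ t₀ ∈ S, ∀ δ : ℝ, 0 < δ → ν (S ∩ ball t₀ δ) ≠ 0 := by
  by_contra h
  push_neg at h
  have hcover : S ⊆ ⋃ p ∈ {p : ℚ × ℚ | ν (S ∩ Ioo (p.1 : ℝ) p.2) = 0}, Ioo (p.1:ℝ) p.2 := by
    intro t ht
    obtain ⟨δ, hδpos, hδ0⟩ := h t ht
    obtain ⟨q₁, hq₁, hq₁'⟩ := exists_rat_btwn (show t - δ < t by linarith)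
    obtain ⟨q₂, hq₂, hq₂'⟩ := exists_rat_btwn (show t < t + δ by linarith)
    have hsub : Ioo (q₁:ℝ) q₂ ⊆ ball t δ := by
      intro s hs
      rw [mem_ball, Real.dist_eq, abs_lt]
      constructor <;> [linarith [hs.1]; linarith [hs.2]]
    refine mem_iUnion₂.2 ⟨(q₁, q₂), ?_, ⟨hq₁', hq₂⟩⟩
    exact le_antisymm ((measure_mono (inter_subset_inter_right S hsub)).trans hδ0.le) zero_le
  apply hS
  have : S = ⋃ p ∈ {p : ℚ × ℚ | ν (S ∩ Ioo (p.1 : ℝ) p.2) = 0}, (S ∩ Ioo (p.1:ℝ) p.2) := by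
    apply Subset.antisymm
    · intro t ht
      obtain ⟨p, hp, htp⟩ := mem_iUnion₂.1 (hcover ht)
      exact mem_iUnion₂.2 ⟨p, hp, ht, htp⟩
    · exact iUnion₂_subset fun p _ => inter_subset_left
  rw [this]
  exact (measure_biUnion_null_iff ((countable_univ (α := ℚ × ℚ)).mono (subset_univ _))).2
    fun p hp => hp

/-- gluing two functions on disjoint compact sets -/
lemma continuousOn_glue {f g h : ℝ → E} {K₁ K₂ : Set ℝ}
    (h₁ : IsCompact K₁) (h₂ : IsCompact K₂) (hd : Disjoint K₁ K₂)
    (hf : ContinuousOn f K₁) (hg : ContinuousOn g K₂)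
    (hhf : ∀ t ∈ K₁, h t = f t) (hhg : ∀ t ∈ K₂, h t = g t) :
    ContinuousOn h (K₁ ∪ K₂) := by
  intro t ht
  rcases ht with ht | ht
  · have hK₂c : K₂ᶜ ∈ 𝓝 t := h₂.isClosed.isOpen_compl.mem_nhds (disjoint_left.1 hd ht)
    have hmem : K₁ ∈ 𝓝[K₁ ∪ K₂] t := by
      filter_upwards [nhdsWithin_le_nhds hK₂c, self_mem_nhdsWithin] with s hs hs'
      exact hs'.resolve_right hs
    have hcwa : ContinuousWithinAt f (K₁ ∪ K₂) t := (hf t ht).mono_of_mem_nhdsWithin hmem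
    refine hcwa.congr_of_eventuallyEq ?_ (hhf t ht)
    filter_upwards [hmem] with s hs using hhf s hs
  · have ht1 : t ∉ K₁ := disjoint_right.1 hd ht
    have hK₁c : K₁ᶜ ∈ 𝓝 t := h₁.isClosed.isOpen_compl.mem_nhds ht1
    have hmem : K₂ ∈ 𝓝[K₁ ∪ K₂] t := by
      filter_upwards [nhdsWithin_le_nhds hK₁c, self_mem_nhdsWithin] with s hs hs'
      exact hs'.resolve_left hs
    have hcwa : ContinuousWithinAt g (K₁ ∪ K₂) t := (hg t ht).mono_of_mem_nhdsWithin hmem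
    refine hcwa.congr_of_eventuallyEq ?_ (hhg t ht)
    filter_upwards [hmem] with s hs using hhg s hs

/-- a BV function is bounded -/
lemma bv_bounded {x : ℝ → E} {T : ℝ} (hT : 0 ≤ T)
    (hbv : BoundedVariationOn x (Icc (0:ℝ) T)) :
    ∃ M : ℝ, 0 ≤ M ∧ ∀ t ∈ Icc (0:ℝ) T, ‖x t‖ ≤ M := by
  refine ⟨‖x 0‖ + (eVariationOn x (Icc (0:ℝ) T)).toReal, by positivity, fun t ht => ?_⟩
  have h0 : (0:ℝ) ∈ Icc (0:ℝ) T := ⟨le_refl 0, hT⟩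
  have := eVariationOn.edist_le x ht h0
  have hdist : dist (x t) (x 0) ≤ (eVariationOn x (Icc (0:ℝ) T)).toReal := by
    rw [dist_edist]
    exact ENNReal.toReal_mono hbv this
  have h3 : ‖x t‖ - ‖x 0‖ ≤ ‖x t - x 0‖ := norm_sub_norm_le _ _
  have h4 : dist (x t) (x 0) = ‖x t - x 0‖ := dist_eq_norm _ _
  linarith

end Aux

section Prim
variable {E : Type*} [NormedAddCommGroup E] [NormedSpace ℝ E] {ν : Measure ℝ}

/-- measurability of the primitive `t ↦ ∫_{(0,t]} v dν` -/
lemma primitive_stronglyMeasurable [IsFiniteMeasure ν] {v : ℝ → E}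
    (hv : AEStronglyMeasurable v ν) :
    ∃ F : ℝ → E, StronglyMeasurable F ∧ ∀ t : ℝ, F t = ∫ s in Ioc (0:ℝ) t, v s ∂ν := by
  haveI : SFinite ν := inferInstance
  set v' := hv.mk v with hv'def
  set g : ℝ × ℝ → E := ({p : ℝ × ℝ | 0 < p.2 ∧ p.2 ≤ p.1}).indicator (fun p => v' p.2) with hgdef
  have hgm : StronglyMeasurable g := by
    apply StronglyMeasurable.indicator
    · exact hv.stronglyMeasurable_mk.comp_measurable measurable_snd
    · exact (measurableSet_lt measurable_const measurable_snd).inter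
        (measurableSet_le measurable_snd measurable_fst)
  refine ⟨fun t => ∫ s, g (t, s) ∂ν, hgm.integral_prod_right', fun t => ?_⟩
  have h1 : ∀ s : ℝ, g (t, s) = (Ioc (0:ℝ) t).indicator v' s := by
    intro s
    simp only [hgdef, indicator, mem_setOf_eq, mem_Ioc]
  show (∫ s, g (t, s) ∂ν) = ∫ s in Ioc (0:ℝ) t, v s ∂ν
  simp only [h1]
  rw [integral_indicator measurableSet_Ioc]
  exact integral_congr_ae (ae_restrict_of_ae hv.ae_eq_mk.symm)

end Prim


section CoreA
variable {H : Type*} [NormedAddCommGroup H] [InnerProductSpace ℝ H] [CompleteSpace H]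

/-- The integrand of the variational principle. -/
noncomputable def BENphi (ρ : ℝ≥0∞) (v x y : ℝ → H) (t : ℝ) : ℝ :=
  ⟪v t, y t - x t⟫ + ‖v t‖ / (2 * ρ.toReal) * ‖y t - x t‖ ^ 2

lemma BENphi_bound {ρ : ℝ≥0∞} {v x y : ℝ → H} {c : ℝ} (hc : 0 ≤ c) {t : ℝ}
    (h : ‖y t - x t‖ ≤ c) : |BENphi ρ v x y t| ≤ ‖v t‖ * (c + c ^ 2 / (2 * ρ.toReal)) := by
  have h2 : ‖v t‖ / (2 * ρ.toReal) * ‖y t - x t‖ ^ 2 ≤ ‖v t‖ / (2 * ρ.toReal) * c ^ 2 := by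
    have h0 : (0:ℝ) ≤ ‖v t‖ / (2 * ρ.toReal) := by positivity
    exact mul_le_mul_of_nonneg_left (pow_le_pow_left₀ (norm_nonneg _) h 2) h0
  have h1 : |⟪v t, y t - x t⟫| ≤ ‖v t‖ * c :=
    (abs_real_inner_le_norm _ _).trans (mul_le_mul_of_nonneg_left h (norm_nonneg _))
  have h3 : (0:ℝ) ≤ ‖v t‖ / (2 * ρ.toReal) * ‖y t - x t‖ ^ 2 := by positivity
  have key : |⟪v t, y t - x t⟫ + ‖v t‖ / (2 * ρ.toReal) * ‖y t - x t‖ ^ 2|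
      ≤ |⟪v t, y t - x t⟫| + ‖v t‖ / (2 * ρ.toReal) * ‖y t - x t‖ ^ 2 := by
    calc |⟪v t, y t - x t⟫ + ‖v t‖ / (2 * ρ.toReal) * ‖y t - x t‖ ^ 2|
        ≤ |⟪v t, y t - x t⟫| + |‖v t‖ / (2 * ρ.toReal) * ‖y t - x t‖ ^ 2| := abs_add_le _ _
      _ = |⟪v t, y t - x t⟫| + ‖v t‖ / (2 * ρ.toReal) * ‖y t - x t‖ ^ 2 := by
          rw [abs_of_nonneg h3]
  have hR : ‖v t‖ * (c + c ^ 2 / (2 * ρ.toReal)) = ‖v t‖ * c + ‖v t‖ / (2 * ρ.toReal) * c ^ 2 := by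
    ring
  unfold BENphi
  rw [hR]
  linarith

lemma BENphi_aesm {ρ : ℝ≥0∞} {v x y : ℝ → H} {ν : Measure ℝ} {A : Set ℝ}
    (hv : AEStronglyMeasurable v (ν.restrict A))
    (hx : AEStronglyMeasurable x (ν.restrict A))
    (hy : AEStronglyMeasurable y (ν.restrict A)) :
    AEStronglyMeasurable (BENphi ρ v x y) (ν.restrict A) := by
  have h1 : AEStronglyMeasurable (fun t => y t - x t) (ν.restrict A) := hy.sub hx
  have h2 : AEStronglyMeasurable (fun t => ‖v t‖ / (2 * ρ.toReal)) (ν.restrict A) := by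
    have := (hv.norm).mul_const (2 * ρ.toReal)⁻¹
    simpa [div_eq_mul_inv] using this
  exact (hv.inner h1).add (h2.mul ((h1.norm).pow 2))

lemma BENphi_integrableOn {ρ : ℝ≥0∞} {v x y : ℝ → H} {ν : Measure ℝ} {T : ℝ}
    (hv : Integrable v ν)
    (hx : AEStronglyMeasurable x (ν.restrict (Icc (0:ℝ) T)))
    (hy : AEStronglyMeasurable y (ν.restrict (Icc (0:ℝ) T)))
    {c : ℝ} (hc0 : 0 ≤ c) (hc : ∀ t ∈ Icc (0:ℝ) T, ‖y t - x t‖ ≤ c) :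
    IntegrableOn (BENphi ρ v x y) (Icc (0:ℝ) T) ν := by
  have hG : Integrable (fun t => ‖v t‖ * (c + c ^ 2 / (2 * ρ.toReal))) ν := hv.norm.mul_const _
  refine Integrable.mono' hG.integrableOn
    (BENphi_aesm hv.aestronglyMeasurable.restrict hx hy) ?_
  rw [ae_restrict_iff' measurableSet_Icc]
  refine ae_of_all _ fun t ht => ?_
  rw [Real.norm_eq_abs]
  exact BENphi_bound hc0 (hc t ht)

end CoreA


section CoreB
variable {H : Type*} [NormedAddCommGroup H] [InnerProductSpace ℝ H] [CompleteSpace H]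

lemma BEN_QtoP {T : ℝ} {ρ : ℝ≥0∞} {C : ℝ → Set H}
    (hC1 : HypH1 ρ C T) {ν : Measure ℝ} (hνc : ν ((Icc (0:ℝ) T)ᶜ) = 0)
    {x v : ℝ → H} (hxC : ∀ t ∈ Icc (0:ℝ) T, x t ∈ C t)
    (hQ : ∀ᵐ t ∂ν, -v t ∈ ProxNormalCone (C t) (x t))
    {y : ℝ → H} (hysel : ∀ᵐ t ∂ν, y t ∈ C t) :
    0 ≤ ∫ t in Icc (0:ℝ) T, BENphi ρ v x y t ∂ν := by
  refine integral_nonneg_of_ae ?_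
  have hI : ∀ᵐ t ∂ν, t ∈ Icc (0:ℝ) T := by
    rw [ae_iff]
    exact hνc
  refine ae_restrict_of_ae ?_
  filter_upwards [hQ, hysel, hI] with t h1 h2 h3
  have hpr := (hC1 t h3).2.2.2
  have hkey := hpr (x t) (hxC t h3) (-v t) h1 (y t) h2
  rw [inner_neg_left, norm_neg] at hkey
  show 0 ≤ BENphi ρ v x y t
  unfold BENphi
  linarith

lemma BEN_approx {T : ℝ} {ρ : ℝ≥0∞} {C : ℝ → Set H} (hC3 : SelectionExtension C T)
    {ν : Measure ℝ} [IsFiniteMeasure ν] [ν.InnerRegular]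
    {x v : ℝ → H}
    {M : ℝ} (hM0 : 0 ≤ M) (hM : ∀ t ∈ Icc (0:ℝ) T, ‖x t‖ ≤ M)
    (hxm : AEStronglyMeasurable x (ν.restrict (Icc (0:ℝ) T)))
    (hv : Integrable v ν)
    (hxC : ∀ t ∈ Icc (0:ℝ) T, x t ∈ C t)
    {ε : ℝ} (hε : 0 < ε) :
    ∃ y : ℝ → H, ContinuousOn y (Icc (0:ℝ) T) ∧ (∀ t ∈ Icc (0:ℝ) T, y t ∈ C t) ∧
      ∫ t in Icc (0:ℝ) T, BENphi ρ v x y t ∂ν ≤ ε := by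
  obtain ⟨R, hRpos, hext⟩ := hC3 x ⟨M, hM⟩ hxC 1 one_pos
  set c : ℝ := R + M with hcdef
  have hc0 : 0 ≤ c := by positivity
  set b : ℝ := c + c ^ 2 / (2 * ρ.toReal) with hbdef
  have hbG : Integrable (fun t => ‖v t‖ * b) ν := hv.norm.mul_const b
  obtain ⟨δ, hδpos, hδ⟩ := exists_small_setIntegral _ hbG hε
  have hmin : min (δ / 2) 1 ≠ 0 := by
    simp only [ne_eq, min_eq_iff, not_or]
    refine ⟨?_, ?_⟩ <;> rintro ⟨h1, -⟩
    · exact (ENNReal.div_ne_zero.2 ⟨hδpos.ne', by norm_num⟩) h1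
    · exact one_ne_zero h1
  obtain ⟨K, hKI, hKcpt, hKmeas, hKcont⟩ :=
    lusin_aestronglyMeasurable measurableSet_Icc hxm hmin
  have hKsmall : ν (Icc (0:ℝ) T \ K) < δ := by
    refine lt_of_le_of_lt hKmeas ?_
    rcases eq_or_ne δ ⊤ with h | h
    · rw [h]
      exact lt_of_le_of_lt (min_le_right _ _) ENNReal.one_lt_top
    · exact lt_of_le_of_lt (min_le_left _ _) (ENNReal.half_lt_self hδpos.ne' h)
  obtain ⟨ybar, hyc, hysel, hyeq, hyR⟩ := hext K hKcpt hKI x hKcont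
    (fun t ht => hxC t (hKI ht)) (fun t ht => by simp)
  refine ⟨ybar, hyc, hysel, ?_⟩
  have hyb : ∀ t ∈ Icc (0:ℝ) T, ‖ybar t - x t‖ ≤ c := fun t ht =>
    (norm_sub_le _ _).trans (add_le_add (hyR t ht) (hM t ht))
  have hint : IntegrableOn (BENphi ρ v x ybar) (Icc (0:ℝ) T) ν :=
    BENphi_integrableOn hv hxm (hyc.aestronglyMeasurable measurableSet_Icc) hc0 hyb
  have hKm : MeasurableSet K := hKcpt.measurableSet
  have hsplit : ∫ t in Icc (0:ℝ) T, BENphi ρ v x ybar t ∂ν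
      = ∫ t in K, BENphi ρ v x ybar t ∂ν + ∫ t in Icc (0:ℝ) T \ K, BENphi ρ v x ybar t ∂ν := by
    rw [← setIntegral_union disjoint_sdiff_right (measurableSet_Icc.diff hKm)
      (hint.mono_set hKI) (hint.mono_set diff_subset), union_diff_cancel hKI]
  have hKzero : ∫ t in K, BENphi ρ v x ybar t ∂ν = 0 := by
    rw [setIntegral_congr_fun hKm (g := fun _ => (0:ℝ)) fun t ht => by
      simp [BENphi, hyeq t ht]]
    exact integral_zero _ _
  have hrest : ∫ t in Icc (0:ℝ) T \ K, BENphi ρ v x ybar t ∂ν ≤ ε := by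
    have h1 : ‖∫ t in Icc (0:ℝ) T \ K, BENphi ρ v x ybar t ∂ν‖
        ≤ ∫ t in Icc (0:ℝ) T \ K, ‖v t‖ * b ∂ν := by
      refine norm_integral_le_of_norm_le hbG.integrableOn ?_
      rw [ae_restrict_iff' (measurableSet_Icc.diff hKm)]
      refine ae_of_all _ fun t ht => ?_
      rw [Real.norm_eq_abs]
      exact BENphi_bound hc0 (hyb t ht.1)
    have h2 : ∫ t in Icc (0:ℝ) T \ K, ‖v t‖ * b ∂ν ≤ ε :=
      (le_abs_self _).trans (hδ _ hKsmall)
    calc ∫ t in Icc (0:ℝ) T \ K, BENphi ρ v x ybar t ∂ν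
        ≤ ‖∫ t in Icc (0:ℝ) T \ K, BENphi ρ v x ybar t ∂ν‖ := le_abs_self _
      _ ≤ _ := h1
      _ ≤ ε := h2
  rw [hsplit, hKzero, zero_add]
  exact hrest


lemma BEN_PtoQ {T : ℝ} {ρ : ℝ≥0∞} {C : ℝ → Set H}
    (hC3 : SelectionExtension C T)
    {ν : Measure ℝ} [IsFiniteMeasure ν] [ν.InnerRegular] (hνc : ν ((Icc (0:ℝ) T)ᶜ) = 0)
    {x v : ℝ → H}
    {M : ℝ} (hM0 : 0 ≤ M) (hM : ∀ t ∈ Icc (0:ℝ) T, ‖x t‖ ≤ M)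
    (hxm : AEStronglyMeasurable x (ν.restrict (Icc (0:ℝ) T)))
    (hv : Integrable v ν)
    (hxC : ∀ t ∈ Icc (0:ℝ) T, x t ∈ C t)
    (hP : ∀ y : ℝ → H, ContinuousOn y (Icc (0:ℝ) T) → (∀ᵐ t ∂ν, y t ∈ C t) →
        0 ≤ ∫ t in Icc (0:ℝ) T, BENphi ρ v x y t ∂ν) :
    ∀ᵐ t ∂ν, -v t ∈ ProxNormalCone (C t) (x t) := by
  classical
  by_contra hcon
  rw [ae_iff] at hcon
  set I := Icc (0:ℝ) T with hIdef
  have hI : ∀ᵐ t ∂ν, t ∈ I := by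
    rw [ae_iff]
    exact hνc
  -- quantitative bad sets
  set fz : ℝ → H → ℝ := fun t z =>
    ⟪v t, z - x t⟫ + ‖v t‖ / (2 * ρ.toReal) * ‖z - x t‖ ^ 2 with hfzdef
  set Nn : ℕ → Set ℝ := fun n =>
    {t | t ∈ I ∧ ∃ z ∈ C t, ‖z - x t‖ < 1 ∧ fz t z < -(1 / (n + 1 : ℝ))} with hNndef
  set N := {t | ¬ -v t ∈ ProxNormalCone (C t) (x t)} with hNdef
  -- N ∩ I is covered by the Nn
  have hcover : N ∩ I ⊆ ⋃ n, Nn n := by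
    rintro t ⟨htN, htI⟩
    have hnot : ¬ ∃ σ : ℝ, 0 ≤ σ ∧ ∃ η : ℝ, 0 < η ∧
        ∀ z ∈ C t, ‖z - x t‖ < η → ⟪-v t, z - x t⟫ ≤ σ * ‖z - x t‖ ^ 2 := htN
    push_neg at hnot
    obtain ⟨z, hzC, hz1, hzgt⟩ := hnot (‖v t‖ / (2 * ρ.toReal)) (by positivity) 1 one_pos
    have hzneg : fz t z < 0 := by
      rw [inner_neg_left] at hzgt
      simp only [hfzdef]
      linarith
    obtain ⟨n, hn⟩ := exists_nat_one_div_lt (show (0:ℝ) < -(fz t z) by linarith)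
    exact mem_iUnion.2 ⟨n, htI, z, hzC, hz1, by linarith⟩
  -- some Nn has positive measure
  have hNI : ν (N ∩ I) ≠ 0 := by
    intro h0
    apply hcon
    have h1 : ν N ≤ ν (N ∩ I) + ν (N \ I) := measure_le_inter_add_diff ν N I
    have h2 : ν (N \ I) = 0 :=
      le_antisymm ((measure_mono (diff_subset_compl N I)).trans hνc.le) zero_le
    rw [h0, h2, add_zero] at h1
    exact le_antisymm h1 zero_le
  obtain ⟨n, hn0⟩ : ∃ n, ν (Nn n) ≠ 0 := by
    by_contra hall
    push_neg at hall
    exact hNI (le_antisymm ((measure_mono hcover).trans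
      (measure_iUnion_null hall).le) zero_le)
  set ε₀ : ℝ := 1 / (n + 1 : ℝ) with hε₀def
  have hε₀pos : 0 < ε₀ := by positivity
  -- Lusin for the pair (v, x) on I
  set a := ν (Nn n) with hadef
  have haT : a ≠ ⊤ := measure_ne_top ν _
  obtain ⟨K₀, hK₀I, hK₀cpt, hK₀meas, hK₀cont⟩ :=
    lusin_aestronglyMeasurable (f := fun t => (v t, x t)) measurableSet_Icc
      ((hv.aestronglyMeasurable.restrict).prodMk hxm)
      (ε := a / 2) (ENNReal.div_ne_zero.2 ⟨hn0, ENNReal.ofNat_ne_top⟩)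
  have hvK : ContinuousOn v K₀ := (continuous_fst.comp_continuousOn hK₀cont :)
  have hxK : ContinuousOn x K₀ := (continuous_snd.comp_continuousOn hK₀cont :)
  -- positive measure of bad times inside K₀
  have hNnI : Nn n ⊆ I := fun t ht => ht.1
  have hSpos : ν (Nn n ∩ K₀) ≠ 0 := by
    intro h0
    have h1 : a ≤ ν (Nn n ∩ K₀) + ν (Nn n \ K₀) := measure_le_inter_add_diff ν _ _
    have h2 : ν (Nn n \ K₀) ≤ a / 2 :=
      (measure_mono (diff_subset_diff_left hNnI)).trans hK₀meas
    rw [h0, zero_add] at h1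
    exact absurd (h1.trans h2) (not_le.2 (ENNReal.half_lt_self hn0 haT))
  -- density point
  obtain ⟨t₀, ht₀S, hdens⟩ := exists_density_point hSpos
  obtain ⟨ht₀I, z₀, hz₀C, hz₀1, hz₀f⟩ := ht₀S.1
  have ht₀K₀ : t₀ ∈ K₀ := ht₀S.2
  -- selection through (t₀, z₀)
  obtain ⟨R₁, hR₁pos, hext₁⟩ := hC3 x ⟨M, hM⟩ hxC 1 one_pos
  obtain ⟨w₁, hw₁c, hw₁sel, hw₁eq, hw₁R⟩ := hext₁ {t₀} isCompact_singleton
    (singleton_subset_iff.2 ht₀I) (fun _ => z₀) continuousOn_const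
    (fun t ht => by rw [mem_singleton_iff] at ht; rw [ht]; exact hz₀C)
    (fun t ht => by rw [mem_singleton_iff] at ht; rw [ht]; exact hz₀1.le)
  -- φ is continuous on K₀ and negative near t₀
  set φ : ℝ → ℝ := BENphi ρ v x w₁ with hφdef
  have hφcont : ContinuousOn φ K₀ := by
    have h1 : ContinuousOn (fun t => w₁ t - x t) K₀ := (hw₁c.mono hK₀I).sub hxK
    exact (hvK.inner h1).add (((hvK.norm.div_const _)).mul ((h1.norm).pow 2))
  have hφt₀ : φ t₀ < -ε₀ := by
    have : w₁ t₀ = z₀ := hw₁eq t₀ rfl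
    simp only [hφdef, BENphi, this]
    exact hz₀f
  have hev : φ ⁻¹' Iio (-(ε₀ / 2)) ∈ 𝓝[K₀] t₀ :=
    hφcont t₀ ht₀K₀ (Iio_mem_nhds (by linarith))
  obtain ⟨U, hUopen, ht₀U, hU⟩ := mem_nhdsWithin.1 hev
  obtain ⟨δ, hδpos, hδball⟩ := Metric.isOpen_iff.1 hUopen t₀ ht₀U
  set E' := K₀ ∩ ball t₀ δ with hE'def
  have hE'm : MeasurableSet E' := hK₀cpt.measurableSet.inter measurableSet_ball
  have hE'pos : ν E' ≠ 0 := by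
    intro h0
    exact hdens δ hδpos (le_antisymm ((measure_mono
      (inter_subset_inter_left _ (inter_subset_right))).trans h0.le) zero_le)
  have hφE' : ∀ t ∈ E', φ t < -(ε₀ / 2) := fun t ht =>
    hU ⟨hδball ht.2, ht.1⟩
  -- compact core of E'
  obtain ⟨Kb, hKbE', hKbcpt, hKblt⟩ :=
    hE'm.exists_isCompact_lt_add (measure_ne_top ν _) (ε := ν E') hE'pos
  have hKbpos : ν Kb ≠ 0 := by
    intro h0
    rw [h0, zero_add] at hKblt
    exact lt_irrefl _ hKblt
  have hKbI : Kb ⊆ I := fun t ht => hK₀I (hKbE' ht).1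
  have hνKbR : 0 < (ν Kb).toReal := ENNReal.toReal_pos hKbpos (measure_ne_top ν _)
  -- second extension data
  set η₂ : ℝ := R₁ + M + 1 with hη₂def
  obtain ⟨R₂, hR₂pos, hext₂⟩ := hC3 x ⟨M, hM⟩ hxC η₂ (by positivity)
  set c₂ : ℝ := R₂ + M with hc₂def
  have hc₂0 : 0 ≤ c₂ := by positivity
  set b₂ : ℝ := c₂ + c₂ ^ 2 / (2 * ρ.toReal) with hb₂def
  have hbG₂ : Integrable (fun t => ‖v t‖ * b₂) ν := hv.norm.mul_const b₂
  set ε₃ : ℝ := ε₀ / 2 * (ν Kb).toReal / 2 with hε₃def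
  have hε₃pos : 0 < ε₃ := by positivity
  obtain ⟨δ₂, hδ₂pos, hδ₂⟩ := exists_small_setIntegral _ hbG₂ hε₃pos
  -- Lusin for x on J = I \ Kb
  set J := I \ Kb with hJdef
  have hJm : MeasurableSet J := measurableSet_Icc.diff hKbcpt.measurableSet
  have hJI : J ⊆ I := diff_subset
  have hxmJ : AEStronglyMeasurable x (ν.restrict J) :=
    hxm.mono_measure (Measure.restrict_mono hJI le_rfl)
  have hmin2 : min (δ₂ / 2) 1 ≠ 0 := by
    simp only [ne_eq, min_eq_iff, not_or]
    refine ⟨?_, ?_⟩ <;> rintro ⟨h1, -⟩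
    · exact (ENNReal.div_ne_zero.2 ⟨hδ₂pos.ne', by norm_num⟩) h1
    · exact one_ne_zero h1
  obtain ⟨Kg, hKgJ, hKgcpt, hKgmeas, hKgcont⟩ :=
    lusin_aestronglyMeasurable hJm hxmJ hmin2
  have hKgsmall : ν (J \ Kg) < δ₂ := by
    refine lt_of_le_of_lt hKgmeas ?_
    rcases eq_or_ne δ₂ ⊤ with h | h
    · rw [h]
      exact lt_of_le_of_lt (min_le_right _ _) ENNReal.one_lt_top
    · exact lt_of_le_of_lt (min_le_left _ _) (ENNReal.half_lt_self hδ₂pos.ne' h)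
  -- glue w₁ on Kb with x on Kg
  set w₂ : ℝ → H := fun t => if t ∈ Kb then w₁ t else x t with hw₂def
  have hdisj : Disjoint Kb Kg := disjoint_left.2 fun t ht ht' => (hKgJ ht').2 ht
  have hw₂Kb : ∀ t ∈ Kb, w₂ t = w₁ t := fun t ht => if_pos ht
  have hw₂Kg : ∀ t ∈ Kg, w₂ t = x t := fun t ht => if_neg (disjoint_right.1 hdisj ht)
  have hw₂cont : ContinuousOn w₂ (Kb ∪ Kg) :=
    continuousOn_glue hKbcpt hKgcpt hdisj (hw₁c.mono hKbI) hKgcont hw₂Kb hw₂Kg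
  have hKbKgI : Kb ∪ Kg ⊆ I := union_subset hKbI (hKgJ.trans hJI)
  have hw₂sel : ∀ t ∈ Kb ∪ Kg, w₂ t ∈ C t := by
    rintro t (ht | ht)
    · rw [hw₂Kb t ht]
      exact hw₁sel t (hKbI ht)
    · rw [hw₂Kg t ht]
      exact hxC t (hJI (hKgJ ht))
  have hw₂bd : ∀ t ∈ Kb ∪ Kg, ‖w₂ t - x t‖ ≤ η₂ := by
    rintro t (ht | ht)
    · rw [hw₂Kb t ht]
      have h1 := hw₁R t (hKbI ht)
      have h2 := hM t (hKbI ht)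
      calc ‖w₁ t - x t‖ ≤ ‖w₁ t‖ + ‖x t‖ := norm_sub_le _ _
        _ ≤ η₂ := by rw [hη₂def]; linarith
    · rw [hw₂Kg t ht]
      simp only [sub_self, norm_zero]
      positivity
  obtain ⟨Y, hYc, hYsel, hYeq, hYR⟩ := hext₂ (Kb ∪ Kg) (hKbcpt.union hKgcpt) hKbKgI
    w₂ hw₂cont hw₂sel hw₂bd
  -- the contradiction
  have hYb : ∀ t ∈ I, ‖Y t - x t‖ ≤ c₂ := fun t ht =>
    (norm_sub_le _ _).trans (by rw [hc₂def]; exact add_le_add (hYR t ht) (hM t ht))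
  have hYint : IntegrableOn (BENphi ρ v x Y) I ν :=
    BENphi_integrableOn hv hxm (hYc.aestronglyMeasurable measurableSet_Icc) hc₂0 hYb
  have hPY := hP Y hYc (by filter_upwards [hI] with t ht using hYsel t ht)
  -- split the integral
  set Rest := I \ (Kb ∪ Kg) with hRestdef
  have hKbKgm : MeasurableSet (Kb ∪ Kg) := (hKbcpt.union hKgcpt).measurableSet
  have hRestm : MeasurableSet Rest := measurableSet_Icc.diff hKbKgm
  have hsplit : ∫ t in I, BENphi ρ v x Y t ∂ν
      = (∫ t in Kb, BENphi ρ v x Y t ∂ν + ∫ t in Kg, BENphi ρ v x Y t ∂ν)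
        + ∫ t in Rest, BENphi ρ v x Y t ∂ν := by
    rw [← setIntegral_union hdisj hKgcpt.measurableSet (hYint.mono_set hKbI)
      (hYint.mono_set (hKgJ.trans hJI))]
    rw [← setIntegral_union disjoint_sdiff_right hRestm
      (hYint.mono_set hKbKgI) (hYint.mono_set diff_subset), union_diff_cancel hKbKgI]
  have hIKb : ∫ t in Kb, BENphi ρ v x Y t ∂ν ≤ -(ε₀ / 2) * (ν Kb).toReal := by
    have hφY : ∀ t ∈ Kb, BENphi ρ v x Y t ≤ -(ε₀ / 2) := by
      intro t ht
      have h1 : Y t = w₁ t := by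
        rw [hYeq t (Or.inl ht), hw₂Kb t ht]
      have h2 : BENphi ρ v x Y t = φ t := by
        simp only [hφdef, BENphi, h1]
      rw [h2]
      exact (hφE' t (hKbE' ht)).le
    calc ∫ t in Kb, BENphi ρ v x Y t ∂ν ≤ ∫ _t in Kb, -(ε₀ / 2) ∂ν :=
          setIntegral_mono_on (hYint.mono_set hKbI)
            (integrableOn_const (measure_ne_top ν Kb) enorm_ne_top)
            hKbcpt.measurableSet hφY
      _ = (ν Kb).toReal * -(ε₀ / 2) := by rw [setIntegral_const]; simp [smul_eq_mul]; exact Or.inl rfl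
      _ = -(ε₀ / 2) * (ν Kb).toReal := by ring
  have hIKg : ∫ t in Kg, BENphi ρ v x Y t ∂ν = 0 := by
    rw [setIntegral_congr_fun hKgcpt.measurableSet (g := fun _ => (0:ℝ)) fun t ht => by
      have h1 : Y t = x t := by rw [hYeq t (Or.inr ht), hw₂Kg t ht]
      simp [BENphi, h1]]
    exact integral_zero _ _
  have hIRest : ∫ t in Rest, BENphi ρ v x Y t ∂ν ≤ ε₃ := by
    have hRsmall : ν Rest < δ₂ := by
      refine lt_of_le_of_lt (measure_mono ?_) hKgsmall
      intro t ht
      exact ⟨⟨ht.1, fun h => ht.2 (Or.inl h)⟩, fun h => ht.2 (Or.inr h)⟩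
    have h1 : ‖∫ t in Rest, BENphi ρ v x Y t ∂ν‖ ≤ ∫ t in Rest, ‖v t‖ * b₂ ∂ν := by
      refine norm_integral_le_of_norm_le hbG₂.integrableOn ?_
      rw [ae_restrict_iff' hRestm]
      refine ae_of_all _ fun t ht => ?_
      rw [Real.norm_eq_abs]
      exact BENphi_bound hc₂0 (hYb t ht.1)
    calc ∫ t in Rest, BENphi ρ v x Y t ∂ν ≤ ‖∫ t in Rest, BENphi ρ v x Y t ∂ν‖ :=
          le_abs_self _
      _ ≤ ∫ t in Rest, ‖v t‖ * b₂ ∂ν := h1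
      _ ≤ ε₃ := (le_abs_self _).trans (hδ₂ _ hRsmall)
  have hneg : ∫ t in I, BENphi ρ v x Y t ∂ν < 0 := by
    rw [hsplit, hIKg, add_zero]
    have : -(ε₀ / 2) * (ν Kb).toReal + ε₃ < 0 := by
      rw [hε₃def]
      nlinarith
    linarith
  exact absurd hPY (not_le.2 hneg)


end CoreB

/-- **Brézis–Ekeland–Nayroles-type principle.** Under (H₁)-(H₃), for an
admissible trajectory `x` with density `v` w.r.t. `ν`, the following are equivalent:
(i) the integral inequality holds against all continuous a.e.-selections of `C`;
(ii) `-v(t) ∈ N^P(C(t); x(t))` for `ν`-a.e. `t`;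
(iii) the variational residual `E_ν(x)` (an infimum in `EReal`) equals `0`. -/
theorem BEN_principle
    {H : Type*} [NormedAddCommGroup H] [InnerProductSpace ℝ H] [CompleteSpace H]
    (T : ℝ) (hT : 0 < T) (ρ : ℝ≥0∞) (hρ : 0 < ρ) (C : ℝ → Set H)
    (hC1 : HypH1 ρ C T) (hC2 : LscOn C (Icc (0:ℝ) T)) (hC3 : SelectionExtension C T)
    (ν : Measure ℝ) (hν : IsRadonOn ν T)
    (x v : ℝ → H) (hadm : AdmissibleTrajectory C T x) (hdens : HasDensity T ν x v) :
    ((∀ y : ℝ → H, ContinuousOn y (Icc (0:ℝ) T) → (∀ᵐ t ∂ν, y t ∈ C t) →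
          0 ≤ ∫ t in Icc (0:ℝ) T,
            (⟪v t, y t - x t⟫ + ‖v t‖ / (2 * ρ.toReal) * ‖y t - x t‖ ^ 2) ∂ν) ↔
        (∀ᵐ t ∂ν, -v t ∈ ProxNormalCone (C t) (x t))) ∧
      ((∀ᵐ t ∂ν, -v t ∈ ProxNormalCone (C t) (x t)) ↔
        sInf {r : EReal | ∃ y : ℝ → H, ContinuousOn y (Icc (0:ℝ) T) ∧
            (∀ᵐ t ∂ν, y t ∈ C t) ∧
            r = ((∫ t in Icc (0:ℝ) T,
              (⟪v t, y t - x t⟫ + ‖v t‖ / (2 * ρ.toReal) * ‖y t - x t‖ ^ 2) ∂ν : ℝ) : EReal)}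
          = (0 : EReal)) := by
  obtain ⟨hνfin, hνreg, hνc⟩ := hν
  haveI := hνfin
  haveI := hνreg
  obtain ⟨M, hM0, hM⟩ := bv_bounded hT.le hadm.2.1
  have hI : ∀ᵐ t ∂ν, t ∈ Icc (0:ℝ) T := by
    rw [ae_iff]
    exact hνc
  have hxC := hadm.2.2.2
  have hv := hdens.1
  obtain ⟨F, hFm, hFeq⟩ := primitive_stronglyMeasurable (ν := ν) hv.aestronglyMeasurable
  have hxm : AEStronglyMeasurable x (ν.restrict (Icc (0:ℝ) T)) := by
    have hsm : StronglyMeasurable (fun t => x 0 + F t) := stronglyMeasurable_const.add hFm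
    refine hsm.aestronglyMeasurable.congr ?_
    rw [Filter.EventuallyEq, ae_restrict_iff' measurableSet_Icc]
    refine ae_of_all _ fun t ht => ?_
    rw [hFeq t]
    exact (hdens.2 t ht).symm
  have hPQ : (∀ y : ℝ → H, ContinuousOn y (Icc (0:ℝ) T) → (∀ᵐ t ∂ν, y t ∈ C t) →
      0 ≤ ∫ t in Icc (0:ℝ) T,
        (⟪v t, y t - x t⟫ + ‖v t‖ / (2 * ρ.toReal) * ‖y t - x t‖ ^ 2) ∂ν) →
      ∀ᵐ t ∂ν, -v t ∈ ProxNormalCone (C t) (x t) := fun hP =>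
    BEN_PtoQ hC3 hνc hM0 hM hxm hv hxC fun y hy hsel => by
      simpa only [BENphi] using hP y hy hsel
  have hQP : (∀ᵐ t ∂ν, -v t ∈ ProxNormalCone (C t) (x t)) →
      ∀ y : ℝ → H, ContinuousOn y (Icc (0:ℝ) T) → (∀ᵐ t ∂ν, y t ∈ C t) →
      0 ≤ ∫ t in Icc (0:ℝ) T,
        (⟪v t, y t - x t⟫ + ‖v t‖ / (2 * ρ.toReal) * ‖y t - x t‖ ^ 2) ∂ν :=
    fun hQ y hy hsel => by
      simpa only [BENphi] using BEN_QtoP hC1 hνc hxC hQ (y := y) hsel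
  refine ⟨⟨fun hP => hPQ hP, fun hQ y hy hsel => hQP hQ y hy hsel⟩, ?_, ?_⟩
  · intro hQ
    apply le_antisymm
    · by_contra hlt
      rw [not_le] at hlt
      obtain ⟨r, h0r, hrInf⟩ := EReal.exists_between_coe_real hlt
      have hrpos : (0:ℝ) < r := by exact_mod_cast h0r
      obtain ⟨y, hy, hysel, hyval⟩ := BEN_approx hC3 hM0 hM hxm hv hxC hrpos
      have hmem : ((∫ t in Icc (0:ℝ) T,
          (⟪v t, y t - x t⟫ + ‖v t‖ / (2 * ρ.toReal) * ‖y t - x t‖ ^ 2) ∂ν : ℝ) : EReal) ∈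
          {r : EReal | ∃ y : ℝ → H, ContinuousOn y (Icc (0:ℝ) T) ∧
            (∀ᵐ t ∂ν, y t ∈ C t) ∧
            r = ((∫ t in Icc (0:ℝ) T,
              (⟪v t, y t - x t⟫ + ‖v t‖ / (2 * ρ.toReal) * ‖y t - x t‖ ^ 2) ∂ν : ℝ) : EReal)} :=
        ⟨y, hy, by filter_upwards [hI] with t ht using hysel t ht, rfl⟩
      have h1 := sInf_le hmem
      have hyval' : (∫ t in Icc (0:ℝ) T,
          (⟪v t, y t - x t⟫ + ‖v t‖ / (2 * ρ.toReal) * ‖y t - x t‖ ^ 2) ∂ν : ℝ) ≤ r := by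
        simpa only [BENphi] using hyval
      have h2 : ((∫ t in Icc (0:ℝ) T,
          (⟪v t, y t - x t⟫ + ‖v t‖ / (2 * ρ.toReal) * ‖y t - x t‖ ^ 2) ∂ν : ℝ) : EReal)
          ≤ (r : EReal) := by exact_mod_cast hyval'
      exact absurd ((h1.trans h2).trans_lt hrInf) (lt_irrefl _)
    · refine le_sInf fun b hb => ?_
      obtain ⟨y, hy, hysel, rfl⟩ := hb
      have := hQP hQ y hy hysel
      exact_mod_cast this
  · intro hinf
    apply hPQ
    intro y hy hsel
    have hmem : ((∫ t in Icc (0:ℝ) T,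
        (⟪v t, y t - x t⟫ + ‖v t‖ / (2 * ρ.toReal) * ‖y t - x t‖ ^ 2) ∂ν : ℝ) : EReal) ∈
        {r : EReal | ∃ y : ℝ → H, ContinuousOn y (Icc (0:ℝ) T) ∧
          (∀ᵐ t ∂ν, y t ∈ C t) ∧
          r = ((∫ t in Icc (0:ℝ) T,
            (⟪v t, y t - x t⟫ + ‖v t‖ / (2 * ρ.toReal) * ‖y t - x t‖ ^ 2) ∂ν : ℝ) : EReal)} :=
      ⟨y, hy, hsel, rfl⟩
    have h1 := sInf_le hmem
    rw [hinf] at h1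
    exact_mod_cast h1
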